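/- The expected runtime of Montanaro's quantum key-guessing algorithm, proportional to ∑_{i=1}^{N} √i · p_i, satisfies 2^{H_{2/3}(D)/2} / √(1 + log₂ N) ≤ ∑_{i=1}^{N} √i · p_i ≤ 2^{H_{2/3}(D)/2}. -/

import Mathlib

/-- **Quantum key guessing (tight analysis of Montanaro's algorithm).** For a
distribution on a finite nonempty set `K` with pmf `P` and keys enumerated in
decreasing order of probability by `e`, the expected quantum guessing time
`∑ i, √i · p_i` satisfies
`2^(H_{2/3}(D)/2) / √(1 + log₂ |K|) ≤ ∑ i, √i · p_i ≤ 2^(H_{2/3}(D)/2)`,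
where `H_{2/3}(D) = 3·log₂(∑_x P(x)^{2/3})`. -/
theorem quantum_key_guessing {K : Type*} [Fintype K] [Nonempty K]
    (P : K → ℝ) (hpos : ∀ x, 0 < P x) (hle : ∀ x, P x ≤ 1)
    (hsum : ∑ x, P x = 1)
    (e : Fin (Fintype.card K) ≃ K)
    (hsort : ∀ i j : Fin (Fintype.card K), i ≤ j → P (e j) ≤ P (e i)) :
    (2 : ℝ) ^ ((3 * Real.logb 2 (∑ x, P x ^ ((2 : ℝ) / 3))) / 2) /
        Real.sqrt (1 + Real.logb 2 (Fintype.card K)) ≤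
      ∑ i : Fin (Fintype.card K), Real.sqrt ((i : ℝ) + 1) * P (e i) ∧
    ∑ i : Fin (Fintype.card K), Real.sqrt ((i : ℝ) + 1) * P (e i) ≤
      (2 : ℝ) ^ ((3 * Real.logb 2 (∑ x, P x ^ ((2 : ℝ) / 3))) / 2) := by
  classical
  have hN1 : 1 ≤ Fintype.card K := Fintype.card_pos
  set S : ℝ := ∑ x, P x ^ ((2 : ℝ) / 3) with hSdef
  set T : ℝ := ∑ i : Fin (Fintype.card K), Real.sqrt ((i : ℝ) + 1) * P (e i) with hTdef
  have hppos : ∀ i : Fin (Fintype.card K), 0 < P (e i) := fun i => hpos (e i)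
  -- S as a sum over Fin (Fintype.card K)
  have hS_fin : S = ∑ i : Fin (Fintype.card K), P (e i) ^ ((2 : ℝ) / 3) := by
    rw [hSdef]
    exact (Fintype.sum_equiv e _ _ (fun i => rfl)).symm
  have hSpos : 0 < S := by
    rw [hS_fin]
    apply Finset.sum_pos
    · intro i _
      exact Real.rpow_pos_of_pos (hppos i) _
    · exact Finset.univ_nonempty
  -- 2 ^ ((3 * logb 2 S)/2) = S ^ (3/2 : ℝ)
  have hpow : (2 : ℝ) ^ ((3 * Real.logb 2 S) / 2) = S ^ ((3 : ℝ) / 2) := by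
    rw [show (3 * Real.logb 2 S) / 2 = Real.logb 2 S * (3 / 2) by ring,
      Real.rpow_mul (by norm_num : (0:ℝ) ≤ 2),
      Real.rpow_logb (by norm_num) (by norm_num) hSpos]
  have hTnonneg : 0 ≤ T := by
    apply Finset.sum_nonneg
    intro i _
    exact mul_nonneg (Real.sqrt_nonneg _) (hppos i).le
  -- Upper bound
  have hupper : T ≤ S ^ ((3 : ℝ) / 2) := by
    have hterm : ∀ i : Fin (Fintype.card K),
        Real.sqrt ((i : ℝ) + 1) * P (e i) ≤ Real.sqrt S * P (e i) ^ ((2 : ℝ) / 3) := by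
      intro i
      have hkey : ((i : ℝ) + 1) * P (e i) ^ ((2 : ℝ) / 3) ≤ S := by
        have h1 : ∑ j ∈ Finset.Iic i, P (e i) ^ ((2 : ℝ) / 3)
            ≤ ∑ j ∈ Finset.Iic i, P (e j) ^ ((2 : ℝ) / 3) := by
          apply Finset.sum_le_sum
          intro j hj
          exact Real.rpow_le_rpow (hppos i).le
            (hsort j i (Finset.mem_Iic.mp hj)) (by norm_num)
        have h2 : ∑ j ∈ Finset.Iic i, P (e j) ^ ((2 : ℝ) / 3) ≤ S := by
          rw [hS_fin]
          apply Finset.sum_le_sum_of_subset_of_nonneg (Finset.subset_univ _)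
          intro j _ _
          exact (Real.rpow_pos_of_pos (hppos j) _).le
        have h3 : ∑ j ∈ Finset.Iic i, P (e i) ^ ((2 : ℝ) / 3)
            = ((i : ℝ) + 1) * P (e i) ^ ((2 : ℝ) / 3) := by
          rw [Finset.sum_const, Fin.card_Iic]
          push_cast
          ring
        linarith
      have hsq : Real.sqrt (((i : ℝ) + 1) * P (e i) ^ ((2 : ℝ) / 3)) ≤ Real.sqrt S :=
        Real.sqrt_le_sqrt hkey
      have hexp : Real.sqrt (((i : ℝ) + 1) * P (e i) ^ ((2 : ℝ) / 3))
          * P (e i) ^ ((2 : ℝ) / 3) = Real.sqrt ((i : ℝ) + 1) * P (e i) := by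
        rw [Real.sqrt_mul (by positivity)]
        have : Real.sqrt (P (e i) ^ ((2 : ℝ) / 3)) = P (e i) ^ ((1 : ℝ) / 3) := by
          rw [Real.sqrt_eq_rpow, ← Real.rpow_mul (hppos i).le]
          norm_num
        rw [this, mul_assoc, ← Real.rpow_add (hppos i)]
        norm_num
      calc Real.sqrt ((i : ℝ) + 1) * P (e i)
          = Real.sqrt (((i : ℝ) + 1) * P (e i) ^ ((2 : ℝ) / 3))
            * P (e i) ^ ((2 : ℝ) / 3) := hexp.symm
        _ ≤ Real.sqrt S * P (e i) ^ ((2 : ℝ) / 3) := by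
            exact mul_le_mul_of_nonneg_right hsq (Real.rpow_nonneg (hppos i).le _)
    calc T ≤ ∑ i : Fin (Fintype.card K), Real.sqrt S * P (e i) ^ ((2 : ℝ) / 3) :=
          Finset.sum_le_sum (fun i _ => hterm i)
      _ = Real.sqrt S * S := by rw [← Finset.mul_sum, ← hS_fin]
      _ = S ^ ((3 : ℝ) / 2) := by
          rw [show S ^ ((3:ℝ)/2) = S ^ ((1:ℝ)/2 + 1) by norm_num,
            Real.rpow_add hSpos, Real.rpow_one, Real.sqrt_eq_rpow]
  -- Lower bound via Hölder
  have hLnonneg : 0 ≤ Real.logb 2 (Fintype.card K : ℝ) :=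
    Real.logb_nonneg (by norm_num) (by exact_mod_cast hN1)
  have hHle : ∑ i : Fin (Fintype.card K), (((i : ℝ) + 1))⁻¹ ≤ 1 + Real.logb 2 (Fintype.card K : ℝ) := by
    have h1 : ∑ i : Fin (Fintype.card K), (((i : ℝ) + 1))⁻¹ = (harmonic (Fintype.card K) : ℝ) := by
      rw [Fin.sum_univ_eq_sum_range (fun i : ℕ => ((i : ℝ) + 1)⁻¹), harmonic]
      push_cast
      rfl
    rw [h1]
    have h2 : (harmonic (Fintype.card K) : ℝ) ≤ 1 + Real.log (Fintype.card K) := harmonic_le_one_add_log (Fintype.card K)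
    have h3 : Real.log (Fintype.card K : ℝ) ≤ Real.logb 2 (Fintype.card K : ℝ) := by
      rw [Real.logb, le_div_iff₀ (Real.log_pos (by norm_num))]
      have hlogN : 0 ≤ Real.log (Fintype.card K : ℝ) :=
        Real.log_nonneg (by exact_mod_cast hN1)
      nlinarith [Real.log_le_sub_one_of_pos (by norm_num : (0:ℝ) < 2)]
    linarith
  have hHolder : S ≤ T ^ ((2 : ℝ) / 3) * (1 + Real.logb 2 (Fintype.card K : ℝ)) ^ ((1 : ℝ) / 3) := by
    have hconj : Real.HolderConjugate (3/2) 3 := ⟨by norm_num, by norm_num, by norm_num⟩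
    have := Real.inner_le_Lp_mul_Lq Finset.univ
      (fun i : Fin (Fintype.card K) => (Real.sqrt ((i : ℝ) + 1) * P (e i)) ^ ((2 : ℝ) / 3))
      (fun i : Fin (Fintype.card K) => (((i : ℝ) + 1))⁻¹ ^ ((1 : ℝ) / 3)) hconj
    have hfg : ∀ i : Fin (Fintype.card K),
        (Real.sqrt ((i : ℝ) + 1) * P (e i)) ^ ((2 : ℝ) / 3)
          * (((i : ℝ) + 1))⁻¹ ^ ((1 : ℝ) / 3) = P (e i) ^ ((2 : ℝ) / 3) := by
      intro i
      have hi1 : (0:ℝ) < (i : ℝ) + 1 := by positivity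
      rw [Real.mul_rpow (Real.sqrt_nonneg _) (hppos i).le]
      have hs : Real.sqrt ((i : ℝ) + 1) ^ ((2 : ℝ) / 3) = ((i : ℝ) + 1) ^ ((1 : ℝ) / 3) := by
        rw [Real.sqrt_eq_rpow, ← Real.rpow_mul hi1.le]
        norm_num
      rw [hs, Real.inv_rpow hi1.le, mul_comm]
      exact inv_mul_cancel_left₀ (ne_of_gt (Real.rpow_pos_of_pos hi1 _)) _
    have habs1 : ∀ i : Fin (Fintype.card K),
        |(Real.sqrt ((i : ℝ) + 1) * P (e i)) ^ ((2 : ℝ) / 3)| ^ (3/2 : ℝ)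
          = Real.sqrt ((i : ℝ) + 1) * P (e i) := by
      intro i
      have hnn : (0:ℝ) ≤ Real.sqrt ((i : ℝ) + 1) * P (e i) :=
        mul_nonneg (Real.sqrt_nonneg _) (hppos i).le
      rw [abs_of_nonneg (Real.rpow_nonneg hnn _), ← Real.rpow_mul hnn]
      norm_num
    have habs2 : ∀ i : Fin (Fintype.card K),
        |(((i : ℝ) + 1))⁻¹ ^ ((1 : ℝ) / 3)| ^ (3 : ℝ) = (((i : ℝ) + 1))⁻¹ := by
      intro i
      have hi1 : (0:ℝ) ≤ (((i : ℝ) + 1))⁻¹ := by positivity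
      rw [abs_of_nonneg (Real.rpow_nonneg hi1 _), ← Real.rpow_mul hi1]
      norm_num
    simp only [hfg] at this
    rw [hS_fin]
    calc ∑ i : Fin (Fintype.card K), P (e i) ^ ((2 : ℝ) / 3) ≤
        (∑ i : Fin (Fintype.card K), |(Real.sqrt ((i : ℝ) + 1) * P (e i)) ^ ((2 : ℝ) / 3)| ^ (3/2 : ℝ)) ^ (1 / (3/2 : ℝ))
          * (∑ i : Fin (Fintype.card K), |(((i : ℝ) + 1))⁻¹ ^ ((1 : ℝ) / 3)| ^ (3 : ℝ)) ^ (1 / (3 : ℝ)) := this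
      _ = T ^ ((2 : ℝ) / 3) * (∑ i : Fin (Fintype.card K), (((i : ℝ) + 1))⁻¹) ^ ((1 : ℝ) / 3) := by
          simp only [habs1, habs2]
          norm_num [hTdef]
      _ ≤ T ^ ((2 : ℝ) / 3) * (1 + Real.logb 2 (Fintype.card K : ℝ)) ^ ((1 : ℝ) / 3) := by
          apply mul_le_mul_of_nonneg_left _ (Real.rpow_nonneg hTnonneg _)
          apply Real.rpow_le_rpow _ hHle (by norm_num)
          positivity
  have hlower : S ^ ((3 : ℝ) / 2) / Real.sqrt (1 + Real.logb 2 (Fintype.card K : ℝ)) ≤ T := by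
    have h1L : (0:ℝ) < 1 + Real.logb 2 (Fintype.card K : ℝ) := by linarith
    have hsqrtpos : 0 < Real.sqrt (1 + Real.logb 2 (Fintype.card K : ℝ)) := Real.sqrt_pos.mpr h1L
    rw [div_le_iff₀ hsqrtpos]
    have hstep : S ^ ((3 : ℝ) / 2) ≤
        (T ^ ((2 : ℝ) / 3) * (1 + Real.logb 2 (Fintype.card K : ℝ)) ^ ((1 : ℝ) / 3)) ^ ((3 : ℝ) / 2) :=
      Real.rpow_le_rpow hSpos.le hHolder (by norm_num)
    have heq : (T ^ ((2 : ℝ) / 3) * (1 + Real.logb 2 (Fintype.card K : ℝ)) ^ ((1 : ℝ) / 3)) ^ ((3 : ℝ) / 2)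
        = T * Real.sqrt (1 + Real.logb 2 (Fintype.card K : ℝ)) := by
      rw [Real.mul_rpow (Real.rpow_nonneg hTnonneg _) (Real.rpow_nonneg h1L.le _),
        ← Real.rpow_mul hTnonneg, ← Real.rpow_mul h1L.le, Real.sqrt_eq_rpow]
      norm_num
    linarith [heq ▸ hstep]
  rw [hpow]
  exact ⟨hlower, hupper⟩
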